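/- Let Φ ∈ ℝ^{m×n} with every m columns linearly independent, Ω ⊆ {1,...,n} with |Ω| < m, and Γ ⊆ {1,...,n}. If r is drawn from a probability distribution on range(Φ_{Ω\Γ}) absolutely continuous with respect to Lebesgue measure on that subspace, then almost surely: every D ⊆ {1,...,n} with |D| < m and r ∈ range(Φ_D) satisfies D ⊇ Ω\Γ. -/

import Mathlib

open MeasureTheory Matrix

noncomputable def toE {m : ℕ} (v : Fin m → ℝ) : EuclideanSpace ℝ (Fin m) :=
  (WithLp.equiv 2 (Fin m → ℝ)).symm v

noncomputable def ofE {m : ℕ} (v : EuclideanSpace ℝ (Fin m)) : Fin m → ℝ :=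
  WithLp.equiv 2 (Fin m → ℝ) v

noncomputable def colSpan {m n : ℕ} (Φ : Matrix (Fin m) (Fin n) ℝ) (S : Set (Fin n)) :
    Submodule ℝ (EuclideanSpace ℝ (Fin m)) :=
  Submodule.span ℝ ((fun j => toE (fun i => Φ i j)) '' S)

def colsLI {m n : ℕ} (Φ : Matrix (Fin m) (Fin n) ℝ) (S : Set (Fin n)) : Prop :=
  LinearIndependent ℝ (fun j : S => toE (fun i => Φ i (j : Fin n)))

lemma not_le_colSpan {m n : ℕ} (Φ : Matrix (Fin m) (Fin n) ℝ)
    (hspark : ∀ S : Finset (Fin n), S.card ≤ m → colsLI Φ ↑S)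
    (A D : Set (Fin n)) (hD : D.ncard < m) (j : Fin n) (hjA : j ∈ A) (hjD : j ∉ D) :
    ¬ colSpan Φ A ≤ colSpan Φ D := by
  classical
  intro hle
  have hDfin : D.Finite := Set.toFinite D
  have hj' : toE (fun i => Φ i j) ∈ colSpan Φ D :=
    hle (Submodule.subset_span ⟨j, hjA, rfl⟩)
  set S : Finset (Fin n) := insert j hDfin.toFinset with hS
  have hcard : S.card ≤ m := by
    have : S.card ≤ hDfin.toFinset.card + 1 := Finset.card_insert_le _ _
    have h2 : hDfin.toFinset.card = D.ncard := (Set.ncard_eq_toFinset_card D hDfin).symm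
    omega
  have li := hspark S hcard
  have hjS : j ∈ (↑S : Set (Fin n)) := by simp [hS]
  have hni := li.notMem_span_image (x := (⟨j, hjS⟩ : (↑S : Set (Fin n))))
    (s := {k : (↑S : Set (Fin n)) | (k : Fin n) ∈ D}) (by simpa using hjD)
  apply hni
  have himg : (fun k : (↑S : Set (Fin n)) => toE fun i => Φ i (k : Fin n)) ''
      {k : (↑S : Set (Fin n)) | (k : Fin n) ∈ D} = (fun j => toE fun i => Φ i j) '' D := by
    ext x
    constructor
    · rintro ⟨k, hk, rfl⟩; exact ⟨k, hk, rfl⟩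
    · rintro ⟨k, hk, rfl⟩
      exact ⟨⟨k, by simp only [hS, Finset.coe_insert, Set.Finite.coe_toFinset, Set.mem_insert_iff]; exact Or.inr hk⟩, hk, rfl⟩
  rw [himg]
  exact hj'

theorem stmt8 {m n : ℕ} (Φ : Matrix (Fin m) (Fin n) ℝ)
    (hspark : ∀ S : Finset (Fin n), S.card ≤ m → colsLI Φ ↑S)
    (Ω Γ : Set (Fin n)) (hΩ : Ω.ncard < m)
    (μ : Measure ↥(colSpan Φ (Ω \ Γ))) (hprob : IsProbabilityMeasure μ)
    (hac : μ ≪ volume) :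
    μ {r : ↥(colSpan Φ (Ω \ Γ)) | ¬ ∀ D : Set (Fin n), D.ncard < m →
        (r : EuclideanSpace ℝ (Fin m)) ∈ colSpan Φ D → Ω \ Γ ⊆ D} = 0 := by
  classical
  set V := colSpan Φ (Ω \ Γ) with hV
  apply hac
  -- the bad set is contained in a countable union of null sets
  have hsub : {r : ↥V | ¬ ∀ D : Set (Fin n), D.ncard < m →
        (r : EuclideanSpace ℝ (Fin m)) ∈ colSpan Φ D → Ω \ Γ ⊆ D} ⊆
      ⋃ D : {D : Set (Fin n) // D.ncard < m ∧ ¬ Ω \ Γ ⊆ D},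
        {r : ↥V | (r : EuclideanSpace ℝ (Fin m)) ∈ colSpan Φ D.1} := by
    intro r hr
    push_neg at hr
    obtain ⟨D, hD1, hD2, hD3⟩ := hr
    exact Set.mem_iUnion.2 ⟨⟨D, hD1, hD3⟩, hD2⟩
  refine measure_mono_null hsub (measure_iUnion_null fun D => ?_)
  obtain ⟨D, hDcard, hDnsub⟩ := D
  obtain ⟨j, hjΩΓ, hjD⟩ := Set.not_subset.1 hDnsub
  have hnle : ¬ V ≤ colSpan Φ D :=
    not_le_colSpan Φ hspark (Ω \ Γ) D hDcard j hjΩΓ hjD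
  have hne : (colSpan Φ D).comap V.subtype ≠ ⊤ := by
    intro htop
    exact hnle (fun x hx => by
      simpa using (htop ▸ Submodule.mem_top : (⟨x, hx⟩ : V) ∈ (colSpan Φ D).comap V.subtype))
  have := Measure.addHaar_submodule (volume : Measure ↥V) ((colSpan Φ D).comap V.subtype) hne
  convert this using 2
  rfl
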